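/- arXiv:1709.05839 — 5 statements merged into one kernel-verified Lean document; each statement's English description precedes it below -/
import Mathlib

section
/- Every Condorcet-winning budget is exhaustive: if the vote profile V is nonempty and B is a feasible budget that dominates every other feasible budget, then there is no item b ∈ P \ B such that B ∪ {b} is feasible. -/
open Classical

variable {α : Type*} [DecidableEq α]

/-- A vote `v : α → ℕ` ranks item `a` above item `b` iff `v a < v b`.
`v` prefers budget `B` over budget `B'` if `B \ B'` is nonempty and
every item of `B \ B'` is ranked above every item of `B' \ B`. -/
def Prefers (v : α → ℕ) (B B' : Finset α) : Prop :=
  (B \ B').Nonempty ∧ ∀ a ∈ B \ B', ∀ b ∈ B' \ B, v a < v b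

/-- The number of votes in the profile `V` that prefer `B` over `B'`. -/
noncomputable def domCount (V : List (α → ℕ)) (B B' : Finset α) : ℕ :=
  V.countP fun v => decide (Prefers v B B')

/-- `B` dominates `B'` if strictly more than half of the votes prefer `B` over `B'`. -/
def Dominates (V : List (α → ℕ)) (B B' : Finset α) : Prop :=
  2 * domCount V B B' > V.length

/-- `B` weakly dominates `B'` (written `B ⊳ B'`) if `B'` does not dominate `B`. -/
def WeakDom (V : List (α → ℕ)) (B B' : Finset α) : Prop :=
  ¬ Dominates V B' B

/-- A budget `B` is feasible if it consists of proposed items and its total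
cost is within the budget limit `ℓ`. -/
def Feasible (P : Finset α) (cost : α → ℕ) (ℓ : ℕ) (B : Finset α) : Prop :=
  B ⊆ P ∧ ∑ b ∈ B, cost b ≤ ℓ

/-- A Condorcet-winning budget is a feasible budget dominating every other
feasible budget. -/
def CondorcetWinning (P : Finset α) (cost : α → ℕ) (ℓ : ℕ)
    (V : List (α → ℕ)) (B : Finset α) : Prop :=
  Feasible P cost ℓ B ∧
  ∀ B', Feasible P cost ℓ B' → B' ≠ B → Dominates V B B'

/-- every Condorcet-winning budget is exhaustive. -/
theorem condorcet_winning_is_exhaustive (P : Finset α) (cost : α → ℕ) (ℓ : ℕ)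
    (V : List (α → ℕ)) (hVne : V ≠ []) (hV : ∀ v ∈ V, Set.InjOn v ↑P)
    (B : Finset α) (hB : CondorcetWinning P cost ℓ V B) :
    ¬ ∃ b, b ∈ P ∧ b ∉ B ∧ Feasible P cost ℓ (insert b B) := by
  rintro ⟨b, _hbP, hbB, hfeas⟩
  have hne : insert b B ≠ B := fun h => hbB (h ▸ Finset.mem_insert_self b B)
  have hdom := hB.2 (insert b B) hfeas hne
  have hzero : domCount V B (insert b B) = 0 := by
    unfold domCount
    rw [List.countP_eq_zero]
    intro v _
    simp only [decide_eq_true_eq]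
    rintro ⟨⟨a, ha⟩, -⟩
    rw [Finset.mem_sdiff] at ha
    exact ha.2 (Finset.mem_insert_of_mem ha.1)
  unfold Dominates at hdom
  rw [hzero] at hdom
  have : 0 < V.length := List.length_pos_iff.mpr hVne
  omega
end

section
/- (Weak majority path implies domination path.) Let P be a budget proposal, V a vote profile, and ℓ a budget limit with cost(a) ≤ ℓ for every item a ∈ P. For items b, b' ∈ P, if there is a weak majority path b ⇝ b' in the weak majority graph of (P, V), then there is a weak domination path {b} ⊳⊳⊳ {b'}. -/
open Classical

variable {α : Type*} [DecidableEq α]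

/-- Number of votes ranking `a` above `b`. -/
noncomputable def aboveCount (V : List (α → ℕ)) (a b : α) : ℕ :=
  V.countP fun v => decide (v a < v b)

/-- Arc `(a, b)` of the majority graph: a strict majority of the votes rank
`a` above `b`. -/
def MajArc (V : List (α → ℕ)) (a b : α) : Prop :=
  2 * aboveCount V a b > V.length

/-- Arc `(a, b)` of the weak majority graph: either the majority graph has the
arc `(a, b)`, or it has neither arc between `a` and `b`. -/
def WeakMajArc (V : List (α → ℕ)) (a b : α) : Prop :=
  MajArc V a b ∨ (¬ MajArc V a b ∧ ¬ MajArc V b a)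

/-- A weak majority path `a ⇝ b`: a directed path in the weak majority graph
on the vertex set `P`. -/
def WeakMajPath (P : Finset α) (V : List (α → ℕ)) (a b : α) : Prop :=
  Relation.ReflTransGen (fun x y => x ∈ P ∧ y ∈ P ∧ WeakMajArc V x y) a b

/-- A weak domination path `B ⊳⊳⊳ B'`: a finite sequence of feasible budgets
starting at `B` and ending at `B'`, each weakly dominating the next. -/
def WDPath (P : Finset α) (cost : α → ℕ) (ℓ : ℕ) (V : List (α → ℕ)) :
    Finset α → Finset α → Prop :=
  Relation.ReflTransGen
    (fun B B' => Feasible P cost ℓ B ∧ Feasible P cost ℓ B' ∧ WeakDom V B B')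

lemma majArc_asymm (V : List (α → ℕ)) {x y : α} (h : MajArc V x y) :
    ¬ MajArc V y x := by
  intro h'
  unfold MajArc aboveCount at h h'
  have hle : V.countP (fun v => decide (v y < v x)) ≤
      V.countP (fun v => ¬ decide (v x < v y)) := by
    apply List.countP_mono_left
    intro v _ hv
    simp only [decide_eq_true_eq, Bool.not_eq_true', decide_eq_false_iff_not,
      decide_not] at hv ⊢
    exact Nat.lt_asymm hv
  have : V.length = _ := List.length_eq_countP_add_countP (fun v : α → ℕ => decide (v x < v y))
  linarith

lemma weakDom_of_not_majArc (V : List (α → ℕ)) {x y : α}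
    (h : ¬ MajArc V y x) : WeakDom V {x} {y} := by
  intro hd
  apply h
  unfold Dominates domCount at hd
  unfold MajArc aboveCount
  have hle : V.countP (fun v => decide (Prefers v {y} {x})) ≤
      V.countP (fun v => decide (v y < v x)) := by
    apply List.countP_mono_left
    intro v _ hv
    simp only [decide_eq_true_eq] at hv ⊢
    obtain ⟨⟨a, ha⟩, hlt⟩ := hv
    simp only [Finset.mem_sdiff, Finset.mem_singleton] at ha
    obtain ⟨rfl, hay⟩ := ha
    refine hlt a ?_ x ?_ <;>
      simp [Finset.mem_sdiff, hay, Ne.symm hay]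
  linarith

/-- weak majority path implies domination path: if every single
item fits within the budget limit and there is a weak majority path
`b ⇝ b'`, then there is a weak domination path `{b} ⊳⊳⊳ {b'}`. -/
theorem weak_majority_path_implies_wdpath (P : Finset α) (cost : α → ℕ)
    (ℓ : ℕ) (V : List (α → ℕ)) (hV : ∀ v ∈ V, Set.InjOn v ↑P)
    (hcost : ∀ a ∈ P, cost a ≤ ℓ)
    (b b' : α) (hb : b ∈ P) (hb' : b' ∈ P)
    (hpath : WeakMajPath P V b b') :
    WDPath P cost ℓ V {b} {b'} := by
  have feas : ∀ x ∈ P, Feasible P cost ℓ ({x} : Finset α) := by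
    intro x hx
    exact ⟨Finset.singleton_subset_iff.mpr hx, by simpa using hcost x hx⟩
  induction hpath with
  | refl => exact Relation.ReflTransGen.refl
  | tail _ hstep ih =>
    rename_i c d _
    obtain ⟨hc, hd, harc⟩ := hstep
    refine Relation.ReflTransGen.tail (ih hc) ⟨feas c hc, feas d hd, ?_⟩
    apply weakDom_of_not_majArc
    rcases harc with h | ⟨_, h⟩
    · exact majArc_asymm V h
    · exact h
end

section
/- (Crucial lemma.) Let P be a budget proposal, V a vote profile, and ℓ a budget limit with cost(a) ≤ ℓ for every item a ∈ P. Let B and B' be two feasible budgets. If there exist items b ∈ B \ B' and b' ∈ B' \ B with a weak majority path b ⇝ b' in the weak majority graph of (P, V), then there is a weak domination path B ⊳⊳⊳ B'. -/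
open Classical

variable {α : Type*} [DecidableEq α]

private lemma countP_two_le {V : List (α → ℕ)} {p q : (α → ℕ) → Bool}
    (h : ∀ v ∈ V, p v = true → q v = false) :
    V.countP p + V.countP q ≤ V.length := by
  induction V with
  | nil => simp
  | cons v t ih =>
    have ih' := ih (fun w hw => h w (List.mem_cons_of_mem _ hw))
    by_cases hp : p v = true
    · have hq := h v List.mem_cons_self hp
      simp [List.countP_cons, hp, hq]; omega
    · simp only [List.countP_cons, List.length_cons]
      simp only [Bool.not_eq_true] at hp
      by_cases hq : q v = true <;> simp [hp, hq] <;> omega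

private lemma not_majArc_rev {V : List (α → ℕ)} {x y : α}
    (h : WeakMajArc V x y) : ¬ MajArc V y x := by
  rcases h with h | ⟨_, h⟩
  · intro h'
    have hle : aboveCount V x y + aboveCount V y x ≤ V.length := by
      apply countP_two_le
      intro v _ hp
      simp only [decide_eq_true_eq] at hp
      simp only [decide_eq_false_iff_not]
      omega
    unfold MajArc at h h'
    omega
  · exact h

private lemma weakDom_single_single {V : List (α → ℕ)} {x y : α}
    (h : WeakMajArc V x y) : WeakDom V {x} {y} := by
  intro hdom
  by_cases hxy : x = y
  · subst hxy
    have : domCount V {x} {x} = 0 := by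
      apply List.countP_eq_zero.mpr
      intro v _
      simp [Prefers]
    unfold Dominates at hdom
    omega
  · have hle : domCount V {y} {x} ≤ aboveCount V y x := by
      apply List.countP_mono_left
      intro v _ hp
      simp only [decide_eq_true_eq] at hp ⊢
      exact hp.2 y (by simp [Ne.symm hxy]) x (by simp [hxy])
    have hmaj := not_majArc_rev h
    unfold Dominates at hdom
    unfold MajArc at hmaj
    omega

private lemma weakDom_single_set {V : List (α → ℕ)} {x y : α} {B' : Finset α}
    (hx : x ∉ B') (hy : y ∈ B') (h : ¬ MajArc V y x) : WeakDom V {x} B' := by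
  intro hdom
  have hxy : y ≠ x := fun he => hx (he ▸ hy)
  have hle : domCount V B' {x} ≤ aboveCount V y x := by
    apply List.countP_mono_left
    intro v _ hp
    simp only [decide_eq_true_eq] at hp ⊢
    exact hp.2 y (by simp [hy, hxy]) x (by simp [hx])
  unfold Dominates at hdom
  unfold MajArc at h
  omega

private lemma weakDom_of_subset {V : List (α → ℕ)} {B C : Finset α}
    (h : C ⊆ B) : WeakDom V B C := by
  intro hdom
  have : domCount V C B = 0 := by
    apply List.countP_eq_zero.mpr
    intro v _
    simp only [decide_eq_true_eq]
    rintro ⟨⟨a, ha⟩, -⟩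
    rw [Finset.mem_sdiff] at ha
    exact ha.2 (h ha.1)
  unfold Dominates at hdom
  omega

private lemma singleton_feasible {P : Finset α} {cost : α → ℕ} {ℓ : ℕ}
    (hcost : ∀ a ∈ P, cost a ≤ ℓ) {x : α} (hx : x ∈ P) :
    Feasible P cost ℓ {x} :=
  ⟨Finset.singleton_subset_iff.mpr hx, by simpa using hcost x hx⟩

private lemma aux_path {P : Finset α} {cost : α → ℕ} {ℓ : ℕ} {V : List (α → ℕ)}
    (hcost : ∀ a ∈ P, cost a ≤ ℓ) {B' : Finset α}
    (hB' : Feasible P cost ℓ B') {b' : α} (hb' : b' ∈ B') :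
    ∀ {x : α}, WeakMajPath P V x b' → x ∉ B' → x ∈ P →
      WDPath P cost ℓ V {x} B' := by
  intro x hpath
  induction hpath using Relation.ReflTransGen.head_induction_on with
  | refl => intro hx _; exact absurd hb' hx
  | head harc _ ih =>
    intro hx hxP
    obtain ⟨hxP', hcP, harc'⟩ := harc
    rename_i c _
    by_cases hc : c ∈ B'
    · exact Relation.ReflTransGen.single
        ⟨singleton_feasible hcost hxP, hB',
          weakDom_single_set hx hc (not_majArc_rev harc')⟩
    · exact Relation.ReflTransGen.head
        ⟨singleton_feasible hcost hxP, singleton_feasible hcost hcP,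
          weakDom_single_single harc'⟩ (ih hc hcP)

/-- crucial lemma: for feasible budgets `B`, `B'`, if some
`b ∈ B \ B'` has a weak majority path to some `b' ∈ B' \ B`, then there is
a weak domination path `B ⊳⊳⊳ B'`. -/
theorem crucial_lemma (P : Finset α) (cost : α → ℕ) (ℓ : ℕ)
    (V : List (α → ℕ)) (hV : ∀ v ∈ V, Set.InjOn v ↑P)
    (hcost : ∀ a ∈ P, cost a ≤ ℓ)
    (B B' : Finset α) (hB : Feasible P cost ℓ B) (hB' : Feasible P cost ℓ B')
    (b b' : α) (hb : b ∈ B \ B') (hb' : b' ∈ B' \ B)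
    (hpath : WeakMajPath P V b b') :
    WDPath P cost ℓ V B B' := by
  have hbB : b ∈ B := (Finset.mem_sdiff.mp hb).1
  have hbB' : b ∉ B' := (Finset.mem_sdiff.mp hb).2
  have hb'B' : b' ∈ B' := (Finset.mem_sdiff.mp hb').1
  have hbP : b ∈ P := hB.1 hbB
  exact Relation.ReflTransGen.head
    ⟨hB, singleton_feasible hcost hbP,
      weakDom_of_subset (Finset.singleton_subset_iff.mpr hbB)⟩
    (aux_path hcost hB' hb'B' hpath hbB' hbP)
end

section
/- Every greedily pruned budget is exhaustive: if C₁, …, C_z is an ordered partition of P (i.e., the C_i are pairwise disjoint with union P) and B is a greedily pruned budget with respect to C₁, …, C_z and the budget limit ℓ, then B is feasible and there is no item b ∈ P \ B such that B ∪ {b} is feasible. -/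
open Classical

variable {α : Type*} [DecidableEq α]

/-- The union of the first `i` components of an ordered partition. -/
def unionUpTo (Cs : List (Finset α)) (i : ℕ) : Finset α :=
  (Cs.take i).foldr (· ∪ ·) ∅

/-- `B` is greedily pruned with respect to the ordered partition
`C₁, …, C_z` (given as a list `Cs`) and the budget limit `ℓ`: `B` consists of
items of the partition and, for each `i`, `B ∩ C_i` is a maximal subset `S` of
`C_i` such that the cost of `(B ∩ (C₁ ∪ … ∪ C_{i-1})) ∪ S` is at most `ℓ`. -/
def GreedilyPruned (cost : α → ℕ) (ℓ : ℕ) (Cs : List (Finset α))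
    (B : Finset α) : Prop :=
  B ⊆ unionUpTo Cs Cs.length ∧
  ∀ i (hi : i < Cs.length),
    (∑ x ∈ (B ∩ unionUpTo Cs i) ∪ (B ∩ Cs.get ⟨i, hi⟩), cost x) ≤ ℓ ∧
    ∀ S ⊆ Cs.get ⟨i, hi⟩, B ∩ Cs.get ⟨i, hi⟩ ⊆ S →
      (∑ x ∈ (B ∩ unionUpTo Cs i) ∪ S, cost x) ≤ ℓ → S = B ∩ Cs.get ⟨i, hi⟩

lemma mem_foldr_union (L : List (Finset α)) (a : α) :
    a ∈ L.foldr (· ∪ ·) ∅ ↔ ∃ C ∈ L, a ∈ C := by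
  induction L with
  | nil => simp
  | cons h t ih => simp [ih]

lemma mem_unionUpTo {Cs : List (Finset α)} {n : ℕ} {a : α} :
    a ∈ unionUpTo Cs n ↔ ∃ i, ∃ h : i < Cs.length, i < n ∧ a ∈ Cs.get ⟨i, h⟩ := by
  rw [unionUpTo, mem_foldr_union]
  constructor
  · rintro ⟨C, hC, haC⟩
    obtain ⟨i, hi, rfl⟩ := List.mem_iff_getElem.mp hC
    simp only [List.length_take, lt_min_iff] at hi
    exact ⟨i, hi.2, hi.1, by rw [List.get_eq_getElem]; rw [List.getElem_take] at *; exact haC⟩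
  · rintro ⟨i, h, hin, ha⟩
    refine ⟨Cs.get ⟨i, h⟩, ?_, ha⟩
    rw [List.get_eq_getElem, List.getElem_take' (xs := Cs) h hin]
    exact List.getElem_mem _

lemma unionUpTo_succ {Cs : List (Finset α)} {i : ℕ} (hi : i < Cs.length) :
    unionUpTo Cs (i + 1) = unionUpTo Cs i ∪ Cs.get ⟨i, hi⟩ := by
  ext a
  simp only [Finset.mem_union, mem_unionUpTo]
  constructor
  · rintro ⟨j, hj, hji, ha⟩
    rcases Nat.lt_succ_iff_lt_or_eq.mp hji with h | rfl
    · exact Or.inl ⟨j, hj, h, ha⟩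
    · exact Or.inr ha
  · rintro (⟨j, hj, hji, ha⟩ | ha)
    · exact ⟨j, hj, Nat.lt_succ_of_lt hji, ha⟩
    · exact ⟨i, hi, Nat.lt_succ_self i, ha⟩

/-- every greedily pruned budget is exhaustive: if `C₁, …, C_z`
is an ordered partition of `P` (pairwise disjoint with union `P`) and `B` is
greedily pruned w.r.t. it and `ℓ`, then `B` is feasible and no further item of
`P` can be added to `B` without exceeding the limit. -/
theorem greedily_pruned_is_exhaustive (P : Finset α) (cost : α → ℕ) (ℓ : ℕ)
    (Cs : List (Finset α))
    (hdisj : ∀ i j (hi : i < Cs.length) (hj : j < Cs.length), i ≠ j →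
      Disjoint (Cs.get ⟨i, hi⟩) (Cs.get ⟨j, hj⟩))
    (hcover : unionUpTo Cs Cs.length = P)
    (B : Finset α) (hgreedy : GreedilyPruned cost ℓ Cs B) :
    Feasible P cost ℓ B ∧
    ¬ ∃ b, b ∈ P ∧ b ∉ B ∧ (∑ x ∈ insert b B, cost x) ≤ ℓ := by
  obtain ⟨hsub, hgr⟩ := hgreedy
  have hBP : B ⊆ P := hcover ▸ hsub
  have hBinter : B ∩ unionUpTo Cs Cs.length = B := Finset.inter_eq_left.mpr hsub
  have hsum : ∑ b ∈ B, cost b ≤ ℓ := by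
    rcases Nat.eq_zero_or_pos Cs.length with h0 | hpos
    · have : B = ∅ := by
        rw [← hBinter, h0]
        simp [unionUpTo]
      simp [this]
    · have hi : Cs.length - 1 < Cs.length := Nat.sub_lt hpos one_pos
      have h1 := (hgr (Cs.length - 1) hi).1
      rw [← Finset.inter_union_distrib_left, ← unionUpTo_succ hi,
        Nat.sub_add_cancel hpos, hBinter] at h1
      exact h1
  refine ⟨⟨hBP, hsum⟩, ?_⟩
  rintro ⟨b, hbP, hbB, hble⟩
  rw [← hcover] at hbP
  obtain ⟨i, hi, -, hbC⟩ := mem_unionUpTo.mp hbP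
  set C := Cs.get ⟨i, hi⟩
  have hmax := (hgr i hi).2 (insert b (B ∩ C))
    (Finset.insert_subset hbC (Finset.inter_subset_right))
    (Finset.subset_insert _ _)
    (by
      refine le_trans (Finset.sum_le_sum_of_subset ?_) hble
      intro x hx
      rcases Finset.mem_union.mp hx with hx | hx
      · exact Finset.mem_insert_of_mem (Finset.mem_inter.mp hx).1
      · rcases Finset.mem_insert.mp hx with rfl | hx
        · exact Finset.mem_insert_self _ _
        · exact Finset.mem_insert_of_mem (Finset.mem_inter.mp hx).1)
  have : b ∈ B ∩ C := hmax ▸ Finset.mem_insert_self b (B ∩ C)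
  exact hbB (Finset.mem_inter.mp this).1
end

section
/- Let A be a finite nonempty set and D an asymmetric binary relation on A (for no a, b do both a D b and b D a hold). Call a nonempty set X ⊆ A dominant if a D b holds for every a ∈ X and every b ∈ A \ X. Then any two dominant sets are comparable by inclusion, and consequently there is a unique minimal dominant set (the Smith set of (A, D)). -/
/-- Given an asymmetric relation `D` on `A`, a nonempty set `X ⊆ A` is
dominant if `a D b` holds for every `a ∈ X` and every `b ∈ A \ X`. -/
def Dominant {A : Type*} (D : A → A → Prop) (X : Set A) : Prop :=
  X.Nonempty ∧ ∀ a ∈ X, ∀ b ∉ X, D a b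

/-- for a finite nonempty set `A` and an asymmetric relation `D`
on `A`, any two dominant sets are comparable by inclusion, and consequently
there is a unique minimal dominant set (the Smith set of `(A, D)`). -/
theorem dominant_sets_chain_and_unique_smith {A : Type*} [Fintype A] [Nonempty A]
    (D : A → A → Prop) (hasymm : ∀ a b, D a b → ¬ D b a) :
    (∀ X Y : Set A, Dominant D X → Dominant D Y → X ⊆ Y ∨ Y ⊆ X) ∧
    (∃! X : Set A, Dominant D X ∧ ∀ Y : Set A, Dominant D Y → X ⊆ Y) := by
  have hcomp : ∀ X Y : Set A, Dominant D X → Dominant D Y → X ⊆ Y ∨ Y ⊆ X := by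
    intro X Y hX hY
    by_contra h
    push_neg at h
    obtain ⟨hXY, hYX⟩ := h
    obtain ⟨x, hxX, hxY⟩ := Set.not_subset.mp hXY
    obtain ⟨y, hyY, hyX⟩ := Set.not_subset.mp hYX
    exact hasymm x y (hX.2 x hxX y hyX) (hY.2 y hyY x hxY)
  refine ⟨hcomp, ?_⟩
  have huniv : Dominant D Set.univ :=
    ⟨Set.univ_nonempty, fun a _ b hb => absurd (Set.mem_univ b) hb⟩
  have : Finite (Set A) := inferInstance
  obtain ⟨X, hXS, hmin⟩ := (Finite.to_wellFoundedLT (α := Set A)).wf.has_min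
    {X : Set A | Dominant D X} ⟨Set.univ, huniv⟩
  have hleast : ∀ Y : Set A, Dominant D Y → X ⊆ Y := by
    intro Y hY
    rcases hcomp X Y hXS hY with h | h
    · exact h
    · rcases eq_or_lt_of_le h with heq | hlt
      · exact heq.ge
      · exact absurd hlt (hmin Y hY)
  refine ⟨X, ⟨hXS, hleast⟩, ?_⟩
  rintro Y ⟨hY, hYleast⟩
  exact subset_antisymm (hYleast X hXS) (hleast Y hY)
end
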